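/- Let G be a thin spider with empty head, body K and feet S, each of size n ≥ 2. Then the minimum number of vertices whose deletion makes G P4-free is exactly n − 1, achieved by deleting any n − 1 feet. -/
import Mathlib

open SimpleGraph

/-- The four (distinct) vertices `a, b, c, d` induce a path `a - b - c - d` in `G`. -/
def IsInducedP4 {V : Type*} (G : SimpleGraph V) (a b c d : V) : Prop :=
  a ≠ b ∧ a ≠ c ∧ a ≠ d ∧ b ≠ c ∧ b ≠ d ∧ c ≠ d ∧
  G.Adj a b ∧ G.Adj b c ∧ G.Adj c d ∧ ¬ G.Adj a c ∧ ¬ G.Adj a d ∧ ¬ G.Adj b d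

/-- A graph is `P₄`-free if no four vertices induce a path on four vertices. -/
def P4Free {V : Type*} (G : SimpleGraph V) : Prop := ∀ a b c d : V, ¬ IsInducedP4 G a b c d

/-- The thin spider with empty head: body `K = {inl i}` is a clique, feet `S = {inr i}` form a
stable set, and `inl i` is adjacent to `inr j` iff `i = j` (a perfect matching of legs). -/
def thinSpider (n : ℕ) : SimpleGraph (Fin n ⊕ Fin n) :=
  SimpleGraph.fromRel (fun a b =>
    match a, b with
    | Sum.inl i, Sum.inl j => i ≠ j
    | Sum.inl i, Sum.inr j => i = j
    | Sum.inr _, _ => False)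

lemma ts_ll {n} (i j : Fin n) : (thinSpider n).Adj (.inl i) (.inl j) ↔ i ≠ j := by
  simp [thinSpider, fromRel_adj]; tauto
lemma ts_lr {n} (i j : Fin n) : (thinSpider n).Adj (.inl i) (.inr j) ↔ i = j := by
  simp [thinSpider, fromRel_adj]
lemma ts_rl {n} (i j : Fin n) : (thinSpider n).Adj (.inr i) (.inl j) ↔ j = i := by
  simp [thinSpider, fromRel_adj]
lemma ind_adj {n} {s : Set (Fin n ⊕ Fin n)} (a b : s) :
    ((thinSpider n).induce s).Adj a b ↔ (thinSpider n).Adj a.1 b.1 := by simp [comap_adj]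
lemma ts_rr {n} (i j : Fin n) : ¬ (thinSpider n).Adj (.inr i) (.inr j) := by
  simp [thinSpider, fromRel_adj]

/-- In the thin spider with empty head, body and feet each of size `n ≥ 2`,
the minimum number of vertices whose deletion makes the graph `P₄`-free is exactly `n − 1`,
and this is achieved by deleting any `n − 1` feet. -/
theorem thinSpider_min_cograph_vertex_deletion (n : ℕ) (hn : 2 ≤ n) :
    (∀ F : Finset (Fin n), F.card = n - 1 →
      P4Free ((thinSpider n).induce ((↑(F.image (Sum.inr : Fin n → Fin n ⊕ Fin n)) : Set (Fin n ⊕ Fin n))ᶜ))) ∧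
    (∀ X : Finset (Fin n ⊕ Fin n),
      P4Free ((thinSpider n).induce ((↑X : Set (Fin n ⊕ Fin n))ᶜ)) → n - 1 ≤ X.card) := by
  constructor
  · intro F hF a b c d h
    obtain ⟨hab, hac, had, hbc, hbd, hcd, Aab, Abc, Acd, Nac, Nad, Nbd⟩ := h
    -- at most one foot remains
    have huniq : ∀ i j : Fin n, i ∉ F → j ∉ F → i = j := by
      intro i j hi hj
      have hc : Fᶜ.card = 1 := by
        have h2 := Finset.card_compl (α := Fin n) F
        simp only [Fintype.card_fin, hF] at h2
        have h3 : F.card ≤ n := hF ▸ Nat.sub_le n 1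
        omega
      exact Finset.card_le_one.mp hc.le i (by simpa using hi) j (by simpa using hj)
    -- case analysis
    obtain ⟨a, ha2⟩ := a; obtain ⟨b, hb2⟩ := b; obtain ⟨c, hc2⟩ := c; obtain ⟨d, hd2⟩ := d
    simp only [comap_adj, ne_eq, Subtype.mk.injEq] at *
    rcases a with i | i <;> rcases b with j | j <;> rcases c with k | k <;> rcases d with l | l <;>
      first
      | exact hab (by rw [huniq i j (by simpa using ha2) (by simpa using hb2)])
      | exact hac (by rw [huniq i k (by simpa using ha2) (by simpa using hc2)])
      | exact had (by rw [huniq i l (by simpa using ha2) (by simpa using hd2)])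
      | exact hbc (by rw [huniq j k (by simpa using hb2) (by simpa using hc2)])
      | exact hbd (by rw [huniq j l (by simpa using hb2) (by simpa using hd2)])
      | exact hcd (by rw [huniq k l (by simpa using hc2) (by simpa using hd2)])
      | simp_all [ts_ll, ts_lr, ts_rl, ts_rr]
  · intro X hfree
    -- covered indices
    set S : Finset (Fin n) := Finset.univ.filter (fun i => Sum.inl i ∈ X ∨ Sum.inr i ∈ X) with hS
    have hcov : ∀ i j : Fin n, i ≠ j → i ∈ S ∨ j ∈ S := by
      intro i j hij
      by_contra hcon
      push_neg at hcon
      obtain ⟨hi, hj⟩ := hcon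
      simp [hS] at hi hj
      have m1 : (Sum.inr i : Fin n ⊕ Fin n) ∈ (↑X : Set (Fin n ⊕ Fin n))ᶜ := by simpa using hi.2
      have m2 : (Sum.inl i : Fin n ⊕ Fin n) ∈ (↑X : Set (Fin n ⊕ Fin n))ᶜ := by simpa using hi.1
      have m3 : (Sum.inl j : Fin n ⊕ Fin n) ∈ (↑X : Set (Fin n ⊕ Fin n))ᶜ := by simpa using hj.1
      have m4 : (Sum.inr j : Fin n ⊕ Fin n) ∈ (↑X : Set (Fin n ⊕ Fin n))ᶜ := by simpa using hj.2
      apply hfree ⟨_, m1⟩ ⟨_, m2⟩ ⟨_, m3⟩ ⟨_, m4⟩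
      refine ⟨?_, ?_, ?_, ?_, ?_, ?_, ?_, ?_, ?_, ?_, ?_, ?_⟩
      · simp [Subtype.ext_iff]
      · simp [Subtype.ext_iff]
      · simp [Subtype.ext_iff, hij]
      · simp [Subtype.ext_iff, hij]
      · simp [Subtype.ext_iff]
      · simp [Subtype.ext_iff]
      · exact (ind_adj _ _).mpr ((ts_rl i i).mpr rfl)
      · exact (ind_adj _ _).mpr ((ts_ll i j).mpr hij)
      · exact (ind_adj _ _).mpr ((ts_lr j j).mpr rfl)
      · exact fun h => hij ((ts_rl i j).mp ((ind_adj _ _).mp h)).symm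
      · exact fun h => ts_rr i j ((ind_adj _ _).mp h)
      · exact fun h => hij ((ts_lr i j).mp ((ind_adj _ _).mp h))
    have hScard : n - 1 ≤ S.card := by
      have : Sᶜ.card ≤ 1 := by
        refine Finset.card_le_one.mpr ?_
        intro i hi j hj
        by_contra hij
        rcases hcov i j hij with h | h
        · exact (Finset.mem_compl.mp hi) h
        · exact (Finset.mem_compl.mp hj) h
      have := Finset.card_compl S
      simp at this
      omega
    have hSX : S.card ≤ X.card := by
      apply Finset.card_le_card_of_injOn (fun i => if Sum.inl i ∈ X then Sum.inl i else Sum.inr i)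
      · intro i hi
        simp [hS] at hi
        by_cases h : Sum.inl i ∈ X
        · simp [h]
        · simp [h]; tauto
      · intro i _ j _ hij
        by_cases h1 : Sum.inl i ∈ X <;> by_cases h2 : Sum.inl j ∈ X <;>
          simp [h1, h2] at hij <;> assumption
    omega
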